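/- For every B ∈ (0,1), the function x ↦ (1-x²)·U'(x) is bounded on (-1,1)∖{-B}, where U' denotes the derivative of U. -/

import Mathlib

noncomputable section

/-- The function `U₁(x) = (c₁(1-x)/(4μ²))·(ln((1+x)/(1-x)) + 2/(1-B²))`. -/
def U₁ (μ c₁ B x : ℝ) : ℝ :=
  c₁ * (1 - x) / (4 * μ ^ 2) * (Real.log ((1 + x) / (1 - x)) + 2 / (1 - B ^ 2))

/-- The function `U` of the switching problem: `U(x) = U₁(x)` for `x ∈ (-B, 1]` and
`U(x) = U₁(-x) + c₂` for `x ∈ (-1, -B]`. -/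
def Ufun (μ c₁ c₂ B x : ℝ) : ℝ :=
  if -B < x then U₁ μ c₁ B x else U₁ μ c₁ B (-x) + c₂

/-- The derivative of `U₁` (written with separated logs). -/
def Dfun (μ c₁ B x : ℝ) : ℝ :=
  (-c₁ / (4 * μ ^ 2)) * (Real.log (1 + x) - Real.log (1 - x) + 2 / (1 - B ^ 2))
    + c₁ * (1 - x) / (4 * μ ^ 2) * ((1 + x)⁻¹ + (1 - x)⁻¹)

lemma tlogt {t : ℝ} (h0 : 0 < t) (h2 : t ≤ 2) : |t * Real.log t| ≤ 2 := by
  rcases le_total 1 t with h1 | h1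
  · have hl0 : 0 ≤ Real.log t := Real.log_nonneg h1
    rw [abs_of_nonneg (by positivity)]
    have : Real.log t ≤ t - 1 := Real.log_le_sub_one_of_pos h0
    nlinarith
  · have hl0 : Real.log t ≤ 0 := Real.log_nonpos (le_of_lt h0) h1
    rw [abs_of_nonpos (by nlinarith)]
    have hinv : Real.log t⁻¹ ≤ t⁻¹ - 1 := Real.log_le_sub_one_of_pos (by positivity)
    rw [Real.log_inv] at hinv
    have ht : t * t⁻¹ = 1 := mul_inv_cancel₀ (ne_of_gt h0)
    nlinarith [mul_le_mul_of_nonneg_left hinv (le_of_lt h0)]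

lemma key_log {x : ℝ} (hx : x ∈ Set.Ioo (-1 : ℝ) 1) :
    |(1 - x ^ 2) * (Real.log (1 + x) - Real.log (1 - x))| ≤ 8 := by
  obtain ⟨h1, h2⟩ := hx
  have hp : 0 < 1 + x := by linarith
  have hm : 0 < 1 - x := by linarith
  have e : (1 - x ^ 2) * (Real.log (1 + x) - Real.log (1 - x))
      = (1 - x) * ((1 + x) * Real.log (1 + x)) - (1 + x) * ((1 - x) * Real.log (1 - x)) := by
    ring
  rw [e]
  have b1 : |(1 + x) * Real.log (1 + x)| ≤ 2 := tlogt hp (by linarith)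
  have b2 : |(1 - x) * Real.log (1 - x)| ≤ 2 := tlogt hm (by linarith)
  have t1 : |(1 - x) * ((1 + x) * Real.log (1 + x))| ≤ 4 := by
    rw [abs_mul]
    have hax : |1 - x| ≤ 2 := by rw [abs_of_pos hm]; linarith
    nlinarith [abs_nonneg ((1 + x) * Real.log (1 + x)), abs_nonneg (1 - x)]
  have t2 : |(1 + x) * ((1 - x) * Real.log (1 - x))| ≤ 4 := by
    rw [abs_mul]
    have hax : |1 + x| ≤ 2 := by rw [abs_of_pos hp]; linarith
    nlinarith [abs_nonneg ((1 - x) * Real.log (1 - x)), abs_nonneg (1 + x)]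
  calc |(1 - x) * ((1 + x) * Real.log (1 + x)) - (1 + x) * ((1 - x) * Real.log (1 - x))|
      ≤ |(1 - x) * ((1 + x) * Real.log (1 + x))| + |(1 + x) * ((1 - x) * Real.log (1 - x))| :=
        abs_sub _ _
    _ ≤ 8 := by linarith

lemma hasDeriv_U₁ (μ c₁ B : ℝ) {x : ℝ} (hx : x ∈ Set.Ioo (-1 : ℝ) 1) :
    HasDerivAt (U₁ μ c₁ B) (Dfun μ c₁ B x) x := by
  obtain ⟨h1, h2⟩ := hx
  have hp : 0 < 1 + x := by linarith
  have hm : 0 < 1 - x := by linarith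
  have hlog1 : HasDerivAt (fun y : ℝ => Real.log (1 + y)) ((1 + x)⁻¹) x := by
    have := (Real.hasDerivAt_log (ne_of_gt hp)).comp x
      ((hasDerivAt_id x).const_add 1)
    simpa [Function.comp_def] using this
  have hlog2 : HasDerivAt (fun y : ℝ => Real.log (1 - y)) (-(1 - x)⁻¹) x := by
    have := (Real.hasDerivAt_log (ne_of_gt hm)).comp x
      ((hasDerivAt_id x).const_sub 1)
    simpa [Function.comp_def] using this
  have hg : HasDerivAt (fun y : ℝ =>
      c₁ * (1 - y) / (4 * μ ^ 2) * (Real.log (1 + y) - Real.log (1 - y) + 2 / (1 - B ^ 2)))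
      (Dfun μ c₁ B x) x := by
    have hf : HasDerivAt (fun y : ℝ => c₁ * (1 - y) / (4 * μ ^ 2)) (-c₁ / (4 * μ ^ 2)) x := by
      have := (((hasDerivAt_id x).const_sub 1).const_mul c₁).div_const (4 * μ ^ 2)
      simpa using this
    have hgg : HasDerivAt (fun y : ℝ =>
        Real.log (1 + y) - Real.log (1 - y) + 2 / (1 - B ^ 2))
        ((1 + x)⁻¹ + (1 - x)⁻¹) x := by
      have := (hlog1.sub hlog2).add_const (2 / (1 - B ^ 2))
      simpa using this
    have := hf.mul hgg
    simpa [Dfun, mul_comm, mul_left_comm, mul_assoc, add_comm, Pi.mul_def] using this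
  refine hg.congr_of_eventuallyEq ?_
  filter_upwards [isOpen_Ioo.mem_nhds (show x ∈ Set.Ioo (-1 : ℝ) 1 from ⟨h1, h2⟩)] with y hy
  obtain ⟨hy1, hy2⟩ := hy
  have hyp : (1 : ℝ) + y ≠ 0 := by linarith
  have hym : (1 : ℝ) - y ≠ 0 := by linarith
  unfold U₁
  rw [Real.log_div hyp hym]

lemma Dfun_bound (μ c₁ B : ℝ) (hμ : 0 < μ) (hc₁ : 0 < c₁) (hB : B ∈ Set.Ioo (0 : ℝ) 1)
    {x : ℝ} (hx : x ∈ Set.Ioo (-1 : ℝ) 1) :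
    |(1 - x ^ 2) * Dfun μ c₁ B x| ≤ c₁ / (4 * μ ^ 2) * (12 + 2 / (1 - B ^ 2)) := by
  obtain ⟨h1, h2⟩ := hx
  have hp : 0 < 1 + x := by linarith
  have hm : 0 < 1 - x := by linarith
  have hB2 : 0 < 1 - B ^ 2 := by nlinarith [hB.1, hB.2]
  set K := 2 / (1 - B ^ 2) with hK
  have hK0 : 0 < K := by positivity
  set L := Real.log (1 + x) - Real.log (1 - x) with hL
  have e : (1 - x ^ 2) * Dfun μ c₁ B x
      = (-c₁ / (4 * μ ^ 2)) * ((1 - x ^ 2) * L + (1 - x ^ 2) * K)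
        + c₁ / (4 * μ ^ 2) * ((1 - x) * 2) := by
    unfold Dfun
    rw [← hL, ← hK]
    field_simp
    ring
  rw [e]
  have hx2 : 0 ≤ 1 - x ^ 2 := by nlinarith
  have hx2' : 1 - x ^ 2 ≤ 1 := by nlinarith
  have hc : (0:ℝ) < c₁ / (4 * μ ^ 2) := by positivity
  calc |(-c₁ / (4 * μ ^ 2)) * ((1 - x ^ 2) * L + (1 - x ^ 2) * K)
        + c₁ / (4 * μ ^ 2) * ((1 - x) * 2)|
      ≤ |(-c₁ / (4 * μ ^ 2)) * ((1 - x ^ 2) * L + (1 - x ^ 2) * K)|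
        + |c₁ / (4 * μ ^ 2) * ((1 - x) * 2)| := abs_add_le _ _
    _ = c₁ / (4 * μ ^ 2) * |(1 - x ^ 2) * L + (1 - x ^ 2) * K|
        + c₁ / (4 * μ ^ 2) * |(1 - x) * 2| := by
        have hca : |c₁ / (4 * μ ^ 2)| = c₁ / (4 * μ ^ 2) := abs_of_pos hc
        have hca' : |(-c₁ / (4 * μ ^ 2))| = c₁ / (4 * μ ^ 2) := by
          rw [abs_div, abs_neg, abs_of_pos hc₁,
            abs_of_pos (show (0:ℝ) < 4 * μ ^ 2 by positivity)]
        rw [abs_mul, abs_mul, hca, hca']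
    _ ≤ c₁ / (4 * μ ^ 2) * (8 + K) + c₁ / (4 * μ ^ 2) * 4 := by
        gcongr
        · calc |(1 - x ^ 2) * L + (1 - x ^ 2) * K|
              ≤ |(1 - x ^ 2) * L| + |(1 - x ^ 2) * K| := abs_add_le _ _
            _ ≤ 8 + K := by
                have := key_log (x := x) ⟨h1, h2⟩
                rw [← hL] at this
                have h2' : |(1 - x ^ 2) * K| ≤ K := by
                  rw [abs_of_nonneg (by positivity)]
                  nlinarith
                linarith
        · rw [abs_of_nonneg (by linarith)]; linarith
    _ = c₁ / (4 * μ ^ 2) * (12 + K) := by ring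

/-- For every `B ∈ (0,1)`, the function `x ↦ (1-x²)·U'(x)` is bounded
on `(-1,1) \ {-B}`, where `U'` denotes the derivative of `U`. -/
theorem U_deriv_bounded (μ c₀ c₁ c₂ : ℝ) (hμ : 0 < μ) (hc₀ : 0 < c₀) (hc₁ : 0 < c₁)
    (hc₂ : 0 < c₂) (B : ℝ) (hB : B ∈ Set.Ioo (0 : ℝ) 1) :
    ∃ C : ℝ, ∀ x ∈ Set.Ioo (-1 : ℝ) 1 \ {-B},
      |(1 - x ^ 2) * deriv (Ufun μ c₁ c₂ B) x| ≤ C := by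
  refine ⟨c₁ / (4 * μ ^ 2) * (12 + 2 / (1 - B ^ 2)), ?_⟩
  rintro x ⟨hx, hxB⟩
  have hxB' : x ≠ -B := hxB
  rcases lt_or_gt_of_ne hxB' with hlt | hgt
  · -- x < -B : Ufun = U₁(-·) + c₂ near x
    have hmem : -x ∈ Set.Ioo (-1 : ℝ) 1 := ⟨by linarith [hx.2], by linarith [hx.1]⟩
    have hU : HasDerivAt (fun y : ℝ => U₁ μ c₁ B (-y) + c₂) (Dfun μ c₁ B (-x) * (-1)) x := by
      exact ((hasDeriv_U₁ μ c₁ B hmem).comp x (hasDerivAt_neg x)).add_const c₂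
    have heq : Ufun μ c₁ c₂ B =ᶠ[nhds x] fun y => U₁ μ c₁ B (-y) + c₂ := by
      filter_upwards [(isOpen_Iio.mem_nhds (show x ∈ Set.Iio (-B) from hlt))] with y hy
      simp only [Set.mem_Iio] at hy
      simp [Ufun, not_lt.mpr hy.le]
    rw [Filter.EventuallyEq.deriv_eq heq, hU.deriv]
    have : (1 - x ^ 2) * (Dfun μ c₁ B (-x) * (-1)) = -((1 - (-x) ^ 2) * Dfun μ c₁ B (-x)) := by
      ring
    rw [this, abs_neg]
    exact Dfun_bound μ c₁ B hμ hc₁ hB hmem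
  · -- x > -B : Ufun = U₁ near x
    have heq : Ufun μ c₁ c₂ B =ᶠ[nhds x] U₁ μ c₁ B := by
      filter_upwards [(isOpen_Ioi.mem_nhds (show x ∈ Set.Ioi (-B) from hgt))] with y hy
      simp only [Set.mem_Ioi] at hy
      simp [Ufun, hy]
    rw [Filter.EventuallyEq.deriv_eq heq, (hasDeriv_U₁ μ c₁ B hx).deriv]
    exact Dfun_bound μ c₁ B hμ hc₁ hB hx
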